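/- Let Ω be a finite state space, A a finite action set, μ₀ ∈ Δ(Ω) a full-support prior, and v : A × Ω → [0,1] the sender's utility. Fix a receiver utility u giving best-reply sets B(a) ⊆ Δ(Ω). Suppose π is a splitting of μ₀ into finitely many posteriors {μᵢ} with weights {αᵢ}, and suppose some posterior μ_k is not an extreme point of B(a_k), where a_k is a sender-optimal best reply at μ_k. Then there exists a splitting π' of μ₀ supported on posteriors that replaces μ_k by extreme points of B(a_k) (all still inducing a_k as a best reply) such that the sender's expected utility under π' (with sender-preferred tie-breaking) is at least that under π. -/

import Mathlib

/-- The receiver's best replies at belief `μ`. -/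
def optSet {N : ℕ} {A : Type*} (u : A → Fin N → ℝ) (μ : EuclideanSpace ℝ (Fin N)) : Set A :=
  {a | ∀ b, ∑ ω, μ ω * u b ω ≤ ∑ ω, μ ω * u a ω}

/-- The sender's indirect utility at belief `μ` (sender-preferred tie-breaking). -/
noncomputable def senderVal {N : ℕ} {A : Type*} (u v : A → Fin N → ℝ)
    (μ : EuclideanSpace ℝ (Fin N)) : ℝ :=
  sSup {t | ∃ a ∈ optSet u μ, t = ∑ ω, μ ω * v a ω}

open Finset in
/-- Linearity of the dot pairing. -/
lemma dot_comb {N : ℕ} (wc : Fin N → ℝ) (p q : EuclideanSpace ℝ (Fin N)) (s t : ℝ) :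
    ∑ j, wc j * (s • p + t • q) j = s * ∑ j, wc j * p j + t * ∑ j, wc j * q j := by
  simp only [PiLp.add_apply, PiLp.smul_apply, smul_eq_mul, mul_add, Finset.sum_add_distrib,
    Finset.mul_sum]
  congr 1 <;> exact Finset.sum_congr rfl fun j _ => by ring

lemma dot_add_smul {N : ℕ} (wc : Fin N → ℝ) (x e : EuclideanSpace ℝ (Fin N)) (t : ℝ) :
    ∑ j, wc j * (x + t • e) j = ∑ j, wc j * x j + t * ∑ j, wc j * e j := by
  have := dot_comb wc x e 1 t
  simpa using this

lemma extremeStep {N : ℕ} {C : Type*} [Fintype C] (w : C → Fin N → ℝ) (b : C → ℝ)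
    (hbd : ∀ d : EuclideanSpace ℝ (Fin N), d ≠ 0 → ∃ c, 0 < ∑ j, w c j * d j)
    (x : EuclideanSpace ℝ (Fin N)) (hxP : ∀ c, ∑ j, w c j * x j ≤ b c)
    (hne : x ∉ Set.extremePoints ℝ {y : EuclideanSpace ℝ (Fin N) | ∀ c, ∑ j, w c j * y j ≤ b c}) :
    ∃ p₁ p₂ : EuclideanSpace ℝ (Fin N),
      (∀ c, ∑ j, w c j * p₁ j ≤ b c) ∧ (∀ c, ∑ j, w c j * p₂ j ≤ b c) ∧
      {c | ∑ j, w c j * p₁ j < b c}.ncard < {c | ∑ j, w c j * x j < b c}.ncard ∧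
      {c | ∑ j, w c j * p₂ j < b c}.ncard < {c | ∑ j, w c j * x j < b c}.ncard ∧
      x ∈ segment ℝ p₁ p₂ := by
  classical
  rw [mem_extremePoints] at hne
  push_neg at hne
  obtain ⟨y, hy, z, hz, hseg, hyz⟩ := hne hxP
  obtain ⟨a, a', ha, ha', hab, hxyz⟩ := hseg
  have hyzne : y ≠ z := by
    rintro rfl
    have : x = y := by
      rw [← hxyz, ← add_smul, hab, one_smul]
    exact hyz this.symm this.symm
  set d : EuclideanSpace ℝ (Fin N) := z - y with hd
  have hdne : d ≠ 0 := sub_ne_zero.2 (Ne.symm hyzne)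
  -- tight constraints are orthogonal to d
  have htight : ∀ c, ∑ j, w c j * x j = b c → ∑ j, w c j * d j = 0 := by
    intro c hc
    have hcomb : a * ∑ j, w c j * y j + a' * ∑ j, w c j * z j = b c := by
      rw [← dot_comb, hxyz, hc]
    have hyb : ∑ j, w c j * y j = b c := by
      by_contra h
      have h1 : ∑ j, w c j * y j < b c := lt_of_le_of_ne (hy c) h
      have h2 : ∑ j, w c j * z j ≤ b c := hz c
      have habc : a * b c + a' * b c = b c := by rw [← add_mul, hab, one_mul]
      linarith [mul_lt_mul_of_pos_left h1 ha, mul_le_mul_of_nonneg_left h2 (le_of_lt ha')]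
    have hzb : ∑ j, w c j * z j = b c := by
      by_contra h
      have h1 : ∑ j, w c j * z j < b c := lt_of_le_of_ne (hz c) h
      have habc : a * b c + a' * b c = b c := by rw [← add_mul, hab, one_mul]
      linarith [mul_lt_mul_of_pos_left h1 ha', mul_le_mul_of_nonneg_left (hy c) (le_of_lt ha)]
    have : ∑ j, w c j * d j = ∑ j, w c j * z j - ∑ j, w c j * y j := by
      rw [← Finset.sum_sub_distrib]
      exact Finset.sum_congr rfl fun j _ => by rw [hd]; simp [mul_sub]
    rw [this, hyb, hzb, sub_self]
  -- key: move along direction e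
  have key : ∀ e : EuclideanSpace ℝ (Fin N), e ≠ 0 →
      (∀ c, ∑ j, w c j * x j = b c → ∑ j, w c j * e j = 0) →
      ∃ (t : ℝ) (p : EuclideanSpace ℝ (Fin N)), 0 < t ∧ p = x + t • e ∧
        (∀ c, ∑ j, w c j * p j ≤ b c) ∧
        {c | ∑ j, w c j * p j < b c}.ncard < {c | ∑ j, w c j * x j < b c}.ncard := by
    intro e hene htighte
    set S : Finset C := Finset.univ.filter (fun c => 0 < ∑ j, w c j * e j) with hS
    have hSne : S.Nonempty := by
      obtain ⟨c, hc⟩ := hbd e hene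
      exact ⟨c, by simp [hS, hc]⟩
    have hSslack : ∀ c ∈ S, ∑ j, w c j * x j < b c := by
      intro c hc
      rcases lt_or_eq_of_le (hxP c) with h | h
      · exact h
      · exfalso
        have := htighte c h
        simp only [hS, Finset.mem_filter] at hc
        linarith [hc.2]
    set f : C → ℝ := fun c => (b c - ∑ j, w c j * x j) / (∑ j, w c j * e j) with hf
    set t : ℝ := S.inf' hSne f with ht
    obtain ⟨c₀, hc₀S, hc₀⟩ := Finset.exists_mem_eq_inf' hSne f
    have hc₀pos : 0 < ∑ j, w c₀ j * e j := by
      simp only [hS, Finset.mem_filter] at hc₀S; exact hc₀S.2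
    have htpos : 0 < t := by
      rw [ht]
      rw [Finset.lt_inf'_iff]
      intro c hc
      have h1 : 0 < ∑ j, w c j * e j := by
        simp only [hS, Finset.mem_filter] at hc; exact hc.2
      exact div_pos (by linarith [hSslack c hc]) h1
    refine ⟨t, x + t • e, htpos, rfl, ?_, ?_⟩
    · intro c
      rw [dot_add_smul]
      rcases le_or_gt (∑ j, w c j * e j) 0 with h | h
      · nlinarith [hxP c]
      · have hcS : c ∈ S := by simp [hS, h]
        have : t ≤ f c := Finset.inf'_le _ hcS
        rw [hf] at this
        rw [le_div_iff₀ h] at this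
        linarith
    · -- slack set strictly shrinks
      apply Set.ncard_lt_ncard _ (Set.toFinite _)
      constructor
      · intro c hc
        simp only [Set.mem_setOf_eq] at hc ⊢
        rcases lt_or_eq_of_le (hxP c) with h | h
        · exact h
        · exfalso
          rw [dot_add_smul, htighte c h, mul_zero, add_zero, h] at hc
          exact lt_irrefl _ hc
      · intro hsub
        have hmem : c₀ ∈ {c | ∑ j, w c j * x j < b c} := hSslack c₀ hc₀S
        have := hsub hmem
        simp only [Set.mem_setOf_eq] at this
        rw [dot_add_smul] at this
        have htc : t = (b c₀ - ∑ j, w c₀ j * x j) / (∑ j, w c₀ j * e j) := by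
          rw [ht, hc₀]
        rw [htc, div_mul_cancel₀ _ (ne_of_gt hc₀pos)] at this
        linarith
  -- apply key to d and -d
  obtain ⟨t₂, p₂, ht₂, hp₂, hp₂P, hp₂lt⟩ := key d hdne htight
  obtain ⟨t₁, p₁, ht₁, hp₁, hp₁P, hp₁lt⟩ := key (-d) (neg_ne_zero.2 hdne)
    (fun c hc => by rw [show ∑ j, w c j * (-d) j = -∑ j, w c j * d j by
      simp [mul_neg]
      , htight c hc, neg_zero])
  refine ⟨p₁, p₂, hp₁P, hp₂P, hp₁lt, hp₂lt, ?_⟩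
  -- x is a convex combination of p₁ and p₂
  refine ⟨t₂ / (t₁ + t₂), t₁ / (t₁ + t₂), by positivity, by positivity, ?_, ?_⟩
  · field_simp
    ring
  · rw [hp₁, hp₂]
    have hT : t₁ + t₂ ≠ 0 := by positivity
    rw [smul_add, smul_add, smul_smul, smul_smul]
    have : (t₂ / (t₁ + t₂)) • x + (t₁ / (t₁ + t₂)) • x = x := by
      rw [← add_smul, ← add_div, add_comm t₂ t₁, div_self hT, one_smul]
    rw [add_add_add_comm, this]
    have h2 : (t₂ / (t₁ + t₂) * t₁) • (-d) + (t₁ / (t₁ + t₂) * t₂) • d = 0 := by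
      rw [smul_neg, ← neg_smul, ← add_smul]
      have h3 : -(t₂ / (t₁ + t₂) * t₁) + t₁ / (t₁ + t₂) * t₂ = 0 := by field_simp; ring
      rw [h3, zero_smul]
    rw [h2, add_zero]

lemma poly_mem_convexHull_aux {N : ℕ} {C : Type*} [Fintype C] (w : C → Fin N → ℝ) (b : C → ℝ)
    (hbd : ∀ d : EuclideanSpace ℝ (Fin N), d ≠ 0 → ∃ c, 0 < ∑ j, w c j * d j) :
    ∀ (n : ℕ) (x : EuclideanSpace ℝ (Fin N)), (∀ c, ∑ j, w c j * x j ≤ b c) →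
      {c | ∑ j, w c j * x j < b c}.ncard ≤ n →
      x ∈ convexHull ℝ
        (Set.extremePoints ℝ {y : EuclideanSpace ℝ (Fin N) | ∀ c, ∑ j, w c j * y j ≤ b c}) := by
  intro n
  induction n with
  | zero =>
    intro x hxP hcard
    by_cases hx : x ∈ Set.extremePoints ℝ
        {y : EuclideanSpace ℝ (Fin N) | ∀ c, ∑ j, w c j * y j ≤ b c}
    · exact subset_convexHull _ _ hx
    · obtain ⟨p₁, p₂, _, _, h1, _, _⟩ := extremeStep w b hbd x hxP hx
      omega
  | succ n ih =>
    intro x hxP hcard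
    by_cases hx : x ∈ Set.extremePoints ℝ
        {y : EuclideanSpace ℝ (Fin N) | ∀ c, ∑ j, w c j * y j ≤ b c}
    · exact subset_convexHull _ _ hx
    · obtain ⟨p₁, p₂, hp₁P, hp₂P, h1, h2, hseg⟩ := extremeStep w b hbd x hxP hx
      exact (convex_convexHull ℝ _).segment_subset (ih p₁ hp₁P (by omega))
        (ih p₂ hp₂P (by omega)) hseg

lemma poly_mem_convexHull {N : ℕ} {C : Type*} [Fintype C] (w : C → Fin N → ℝ) (b : C → ℝ)
    (hbd : ∀ d : EuclideanSpace ℝ (Fin N), d ≠ 0 → ∃ c, 0 < ∑ j, w c j * d j)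
    (x : EuclideanSpace ℝ (Fin N)) (hxP : ∀ c, ∑ j, w c j * x j ≤ b c) :
    x ∈ convexHull ℝ
      (Set.extremePoints ℝ {y : EuclideanSpace ℝ (Fin N) | ∀ c, ∑ j, w c j * y j ≤ b c}) :=
  poly_mem_convexHull_aux w b hbd _ x hxP le_rfl


-- the B-set as a polytope
lemma Bset_eq_poly {N : ℕ} {A : Type*} [Fintype A] (u : A → Fin N → ℝ) (ak : A) :
    {μ : EuclideanSpace ℝ (Fin N) | (∀ j, 0 ≤ μ j) ∧ (∑ j, μ j = 1) ∧ ak ∈ optSet u μ} =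
    {y : EuclideanSpace ℝ (Fin N) | ∀ c : (Fin N) ⊕ (A ⊕ Fin 2),
      ∑ j, (Sum.elim (fun j' i => if i = j' then (-1:ℝ) else 0)
        (Sum.elim (fun a' i => u a' i - u ak i) (fun s i => if s = 0 then 1 else -1)) c) j * y j
        ≤ Sum.elim (fun _ => (0:ℝ)) (Sum.elim (fun _ => 0) (fun s => if s = 0 then 1 else -1)) c}
    := by
  ext y
  simp only [Set.mem_setOf_eq]
  constructor
  · rintro ⟨h0, h1, hopt⟩ c
    match c with
    | Sum.inl j' =>
      simp only [Sum.elim_inl, ite_mul, neg_mul, one_mul, zero_mul]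
      rw [Finset.sum_ite_eq' Finset.univ j' (fun j => -y j)]
      simpa using h0 j'
    | Sum.inr (Sum.inl a') =>
      simp only [Sum.elim_inr, Sum.elim_inl, sub_mul]
      rw [Finset.sum_sub_distrib]
      have := hopt a'
      simp only [mul_comm] at this
      linarith
    | Sum.inr (Sum.inr s) =>
      fin_cases s <;> simp [h1] <;> linarith [h1.ge]
  · intro h
    refine ⟨fun j => ?_, ?_, fun a' => ?_⟩
    · have := h (Sum.inl j)
      simp only [Sum.elim_inl, ite_mul, neg_mul, one_mul, zero_mul] at this
      rw [Finset.sum_ite_eq' Finset.univ j (fun j => -y j)] at this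
      simpa using this
    · have h1 := h (Sum.inr (Sum.inr 0))
      have h2 := h (Sum.inr (Sum.inr 1))
      simp at h1 h2
      linarith
    · have := h (Sum.inr (Sum.inl a'))
      simp only [Sum.elim_inr, Sum.elim_inl, sub_mul] at this
      rw [Finset.sum_sub_distrib] at this
      simp only [mul_comm]
      linarith

lemma Bset_hbd {N : ℕ} {A : Type*} [Fintype A] (u : A → Fin N → ℝ) (ak : A)
    (d : EuclideanSpace ℝ (Fin N)) (hd : d ≠ 0) :
    ∃ c : (Fin N) ⊕ (A ⊕ Fin 2),
      0 < ∑ j, (Sum.elim (fun j' i => if i = j' then (-1:ℝ) else 0)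
        (Sum.elim (fun a' i => u a' i - u ak i) (fun s i => if s = 0 then 1 else -1)) c) j * d j
    := by
  by_cases hneg : ∃ j, d j < 0
  · obtain ⟨j, hj⟩ := hneg
    refine ⟨Sum.inl j, ?_⟩
    simp only [Sum.elim_inl, ite_mul, neg_mul, one_mul, zero_mul]
    rw [Finset.sum_ite_eq' Finset.univ j (fun j => -d j)]
    simpa using hj
  · push_neg at hneg
    have hex : ∃ j, d j ≠ 0 := by
      by_contra h
      push_neg at h
      exact hd (PiLp.ext fun j => by simp [h j])
    obtain ⟨j, hj⟩ := hex
    refine ⟨Sum.inr (Sum.inr 0), ?_⟩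
    simp only [Sum.elim_inr]
    have : (0:ℝ) < ∑ j, d j :=
      Finset.sum_pos' (fun i _ => hneg i) ⟨j, Finset.mem_univ j, lt_of_le_of_ne (hneg j) (Ne.symm hj)⟩
    simpa using this

lemma rep_of_mem_convexHull {N : ℕ} (s : Set (EuclideanSpace ℝ (Fin N)))
    (x : EuclideanSpace ℝ (Fin N)) (hx : x ∈ convexHull ℝ s) :
    ∃ (M : ℕ), 0 < M ∧ ∃ (wts : Fin M → ℝ) (pts : Fin M → EuclideanSpace ℝ (Fin N)),
      (∀ m, 0 ≤ wts m) ∧ ∑ m, wts m = 1 ∧ (∀ m, pts m ∈ s) ∧ ∑ m, wts m • pts m = x := by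
  rw [convexHull_eq] at hx
  obtain ⟨ι, t, wt, zf, hw0, hw1, hzs, hcm⟩ := hx
  rw [Finset.centerMass_eq_of_sum_1 _ _ hw1] at hcm
  have htne : t.Nonempty := Finset.nonempty_of_sum_ne_zero (by rw [hw1]; norm_num)
  refine ⟨t.card, Finset.card_pos.2 htne, fun m => wt (t.equivFin.symm m),
    fun m => zf (t.equivFin.symm m), fun m => hw0 _ (t.equivFin.symm m).2, ?_,
    fun m => hzs _ (t.equivFin.symm m).2, ?_⟩
  · rw [Equiv.sum_comp t.equivFin.symm (fun i : t => wt i), Finset.sum_coe_sort t wt, hw1]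
  · rw [Equiv.sum_comp t.equivFin.symm (fun i : t => wt i • zf i),
      Finset.sum_coe_sort t (fun i => wt i • zf i), hcm]

lemma senderVal_eq_of_sup {N : ℕ} {A : Type*} (u v : A → Fin N → ℝ)
    (μ : EuclideanSpace ℝ (Fin N)) (a : A) (ha : a ∈ optSet u μ)
    (hsup : ∀ b ∈ optSet u μ, ∑ ω, μ ω * v b ω ≤ ∑ ω, μ ω * v a ω) :
    senderVal u v μ = ∑ ω, μ ω * v a ω :=
  IsGreatest.csSup_eq ⟨⟨a, ha, rfl⟩, by rintro t ⟨b, hb, rfl⟩; exact hsup b hb⟩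

lemma le_senderVal {N : ℕ} {A : Type*} (u v : A → Fin N → ℝ)
    (hv : ∀ a ω, v a ω ∈ Set.Icc (0:ℝ) 1)
    (μ : EuclideanSpace ℝ (Fin N)) (h0 : ∀ j, 0 ≤ μ j) (h1 : ∑ j, μ j = 1)
    (a : A) (ha : a ∈ optSet u μ) :
    ∑ ω, μ ω * v a ω ≤ senderVal u v μ := by
  have hmem : (∑ ω, μ ω * v a ω) ∈ {t | ∃ a ∈ optSet u μ, t = ∑ ω, μ ω * v a ω} :=
    ⟨a, ha, rfl⟩
  apply le_csSup _ hmem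
  refine ⟨1, ?_⟩
  rintro t ⟨b, hb, rfl⟩
  calc ∑ ω, μ ω * v b ω ≤ ∑ ω, μ ω * 1 :=
        Finset.sum_le_sum fun ω _ => mul_le_mul_of_nonneg_left (hv b ω).2 (h0 ω)
    _ = 1 := by simpa using h1


/-- A posterior that is not an extreme point of its best-reply region can be replaced by
extreme points of that region without lowering the sender's expected utility. -/
theorem stmt12 (N I : ℕ) (A : Type*) [Fintype A] (u v : A → Fin N → ℝ)
    (hv : ∀ a ω, v a ω ∈ Set.Icc (0:ℝ) 1)
    (μ₀ : EuclideanSpace ℝ (Fin N)) (hμ₀pos : ∀ j, 0 < μ₀ j) (hμ₀sum : ∑ j, μ₀ j = 1)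
    (B : A → Set (EuclideanSpace ℝ (Fin N)))
    (hB : ∀ a, B a = {μ | (∀ j, 0 ≤ μ j) ∧ (∑ j, μ j = 1) ∧ a ∈ optSet u μ})
    (α : Fin I → ℝ) (hα : ∀ i, 0 < α i) (hαsum : ∑ i, α i = 1)
    (μ : Fin I → EuclideanSpace ℝ (Fin N))
    (hμΔ : ∀ i, (∀ j, 0 ≤ μ i j) ∧ ∑ j, μ i j = 1)
    (havg : ∑ i, α i • μ i = μ₀)
    (k : Fin I) (ak : A)
    (hak : ak ∈ optSet u (μ k))
    (haksup : ∀ a ∈ optSet u (μ k), ∑ ω, μ k ω * v a ω ≤ ∑ ω, μ k ω * v ak ω)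
    (hnotext : μ k ∉ Set.extremePoints ℝ (B ak)) :
    ∃ (J : ℕ) (β : Fin J → ℝ) (ν : Fin J → EuclideanSpace ℝ (Fin N)),
      (∀ j, 0 ≤ β j) ∧ (∑ j, β j = 1) ∧ (∑ j, β j • ν j = μ₀) ∧
      (∀ j, (∃ i, i ≠ k ∧ ν j = μ i) ∨ ν j ∈ Set.extremePoints ℝ (B ak)) ∧
      ∑ i, α i * senderVal u v (μ i) ≤ ∑ j, β j * senderVal u v (ν j) := by
  classical
  have hBk := hB ak
  have hμkB : μ k ∈ B ak := by rw [hBk]; exact ⟨(hμΔ k).1, (hμΔ k).2, hak⟩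
  have hμkB' := hμkB
  rw [hBk, Bset_eq_poly u ak] at hμkB'
  have hhull : μ k ∈ convexHull ℝ (Set.extremePoints ℝ (B ak)) := by
    rw [hBk, Bset_eq_poly u ak]
    exact poly_mem_convexHull _ _ (Bset_hbd u ak) _ hμkB'
  obtain ⟨M, hM, wts, pts, hw0, hw1, hpts, hsum⟩ := rep_of_mem_convexHull _ _ hhull
  have hptsB : ∀ m, pts m ∈ B ak := fun m => extremePoints_subset (hpts m)
  have hptsB' : ∀ m, (∀ j, 0 ≤ pts m j) ∧ (∑ j, pts m j = 1) ∧ ak ∈ optSet u (pts m) := by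
    intro m; have := hptsB m; rwa [hBk] at this
  set m0 : Fin M := ⟨0, hM⟩ with hm0
  set β : Fin (I + M) → ℝ :=
    Fin.addCases (fun i => if i = k then 0 else α i) (fun m => α k * wts m) with hβ
  set ν : Fin (I + M) → EuclideanSpace ℝ (Fin N) :=
    Fin.addCases (fun i => if i = k then pts m0 else μ i) pts with hν
  have hβl : ∀ i : Fin I, β (Fin.castAdd M i) = if i = k then 0 else α i := by
    intro i; simp [hβ]
  have hβr : ∀ m : Fin M, β (Fin.natAdd I m) = α k * wts m := by
    intro m; simp [hβ]
  have hνl : ∀ i : Fin I, ν (Fin.castAdd M i) = if i = k then pts m0 else μ i := by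
    intro i; simp [hν]
  have hνr : ∀ m : Fin M, ν (Fin.natAdd I m) = pts m := by
    intro m; simp [hν]
  refine ⟨I + M, β, ν, ?_, ?_, ?_, ?_, ?_⟩
  · -- nonneg
    intro j
    refine Fin.addCases (fun i => ?_) (fun m => ?_) j
    · rw [hβl]; split
      · exact le_refl 0
      · exact (hα _).le
    · rw [hβr]; exact mul_nonneg (hα k).le (hw0 m)
  · -- sums to one
    rw [Fin.sum_univ_add]
    have h1 : ∑ i : Fin I, β (Fin.castAdd M i) = 1 - α k := by
      rw [Finset.sum_congr rfl fun i _ => hβl i]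
      have : ∀ i ∈ Finset.univ, (if i = k then (0:ℝ) else α i)
          = α i - (if i = k then α i else 0) := by
        intro i _; split <;> simp
      rw [Finset.sum_congr rfl this, Finset.sum_sub_distrib, hαsum,
        Finset.sum_ite_eq' Finset.univ k α]
      simp
    have h2 : ∑ m : Fin M, β (Fin.natAdd I m) = α k := by
      rw [Finset.sum_congr rfl fun m _ => hβr m, ← Finset.mul_sum, hw1, mul_one]
    rw [h1, h2]; ring
  · -- barycenter
    rw [Fin.sum_univ_add]
    have h1 : ∑ i : Fin I, β (Fin.castAdd M i) • ν (Fin.castAdd M i)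
        = (∑ i, α i • μ i) - α k • μ k := by
      have : ∀ i ∈ Finset.univ, β (Fin.castAdd M i) • ν (Fin.castAdd M i)
          = α i • μ i - (if i = k then α i • μ i else 0) := by
        intro i _; rw [hβl, hνl]; split <;> simp
      rw [Finset.sum_congr rfl this, Finset.sum_sub_distrib,
        Finset.sum_ite_eq' Finset.univ k (fun i => α i • μ i)]
      simp
    have h2 : ∑ m : Fin M, β (Fin.natAdd I m) • ν (Fin.natAdd I m) = α k • μ k := by
      have : ∀ m ∈ Finset.univ, β (Fin.natAdd I m) • ν (Fin.natAdd I m)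
          = α k • (wts m • pts m) := by
        intro m _; rw [hβr, hνr, mul_smul]
      rw [Finset.sum_congr rfl this, ← Finset.smul_sum, hsum]
    rw [h1, h2, sub_add_cancel, havg]
  · -- support
    intro j
    refine Fin.addCases (fun i => ?_) (fun m => ?_) j
    · rw [hνl]
      by_cases h : i = k
      · rw [if_pos h]; exact Or.inr (hpts m0)
      · rw [if_neg h]; exact Or.inl ⟨i, h, rfl⟩
    · rw [hνr]; exact Or.inr (hpts m)
  · -- value improves
    have hsvk : senderVal u v (μ k) = ∑ ω, μ k ω * v ak ω :=
      senderVal_eq_of_sup u v _ ak hak haksup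
    have hcoord : ∀ ω, ∑ m, wts m * pts m ω = μ k ω := by
      intro ω
      have h : (∑ m, wts m • pts m) ω = μ k ω := by rw [hsum]
      rw [WithLp.ofLp_sum, Finset.sum_apply ω Finset.univ (fun m => (wts m • pts m).ofLp)] at h
      simpa using h
    have key : senderVal u v (μ k) ≤ ∑ m, wts m * senderVal u v (pts m) := by
      rw [hsvk]
      have heq : ∑ ω, μ k ω * v ak ω = ∑ m, wts m * ∑ ω, pts m ω * v ak ω := by
        have : ∀ m ∈ Finset.univ, wts m * ∑ ω, pts m ω * v ak ω
            = ∑ ω, wts m * pts m ω * v ak ω := by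
          intro m _; rw [Finset.mul_sum]; exact Finset.sum_congr rfl fun ω _ => by ring
        rw [Finset.sum_congr rfl this, Finset.sum_comm]
        refine Finset.sum_congr rfl fun ω _ => ?_
        rw [← Finset.sum_mul, hcoord]
      rw [heq]
      refine Finset.sum_le_sum fun m _ => mul_le_mul_of_nonneg_left ?_ (hw0 m)
      exact le_senderVal u v hv _ (hptsB' m).1 (hptsB' m).2.1 ak (hptsB' m).2.2
    rw [Fin.sum_univ_add]
    have h1 : ∑ i : Fin I, β (Fin.castAdd M i) * senderVal u v (ν (Fin.castAdd M i))
        = (∑ i, α i * senderVal u v (μ i)) - α k * senderVal u v (μ k) := by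
      have : ∀ i ∈ Finset.univ, β (Fin.castAdd M i) * senderVal u v (ν (Fin.castAdd M i))
          = α i * senderVal u v (μ i) - (if i = k then α i * senderVal u v (μ i) else 0) := by
        intro i _; rw [hβl, hνl]; split <;> simp
      rw [Finset.sum_congr rfl this, Finset.sum_sub_distrib,
        Finset.sum_ite_eq' Finset.univ k (fun i => α i * senderVal u v (μ i))]
      simp
    have h2 : ∑ m : Fin M, β (Fin.natAdd I m) * senderVal u v (ν (Fin.natAdd I m))
        = α k * ∑ m, wts m * senderVal u v (pts m) := by
      rw [Finset.mul_sum]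
      refine Finset.sum_congr rfl fun m _ => ?_
      rw [hβr, hνr]; ring
    rw [h1, h2]
    have := mul_le_mul_of_nonneg_left key (hα k).le
    linarith
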